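/- There is an absolute constant C > 0 with the following property. For all reals r > 0, ψ > 0 and all a, b with −3π/4 ≤ a ≤ b ≤ 3π/4, ∫_a^b ( 1 − (r/(r+2ψ)) cos λ )^{-1} dλ ≤ C · (b−a) · ((r+2ψ)/ψ) · sup_{λ ∈ [a,b]} ( 1 + ((r+ψ)/ψ) tan²(λ/2) )^{-1}. -/

import Mathlib

open MeasureTheory

set_option maxHeartbeats 1000000 in
/-- There is an absolute constant `C > 0` such that for all `r, ψ > 0` and
`-3π/4 ≤ a ≤ b ≤ 3π/4`:
`∫_a^b (1 - (r/(r+2ψ)) cos λ)⁻¹ dλ ≤ C (b-a) ((r+2ψ)/ψ) sup_{λ ∈ [a,b]} (1 + ((r+ψ)/ψ) tan²(λ/2))⁻¹`. -/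
theorem stmt_16 :
    ∃ C > (0 : ℝ), ∀ r ψ a b : ℝ, 0 < r → 0 < ψ →
      -(3 * Real.pi / 4) ≤ a → a ≤ b → b ≤ 3 * Real.pi / 4 →
      (∫ l in a..b, (1 - r / (r + 2 * ψ) * Real.cos l)⁻¹) ≤
        C * (b - a) * ((r + 2 * ψ) / ψ) *
          ⨆ l ∈ Set.Icc a b, (1 + (r + ψ) / ψ * Real.tan (l / 2) ^ 2)⁻¹ := by
  refine ⟨100, by norm_num, ?_⟩
  intro r ψ a b hr hψ ha hab hb
  have hrψ : 0 < r + 2 * ψ := by linarith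
  set k : ℝ := r / (r + 2 * ψ) with hkdef
  have hk0 : 0 < k := div_pos hr hrψ
  have hk1 : k < 1 := (div_lt_one hrψ).2 (by linarith)
  have hA : ∀ x : ℝ, 0 < 1 - k * Real.cos x := by
    intro x
    nlinarith [Real.cos_le_one x, Real.neg_one_le_cos x]
  set g : ℝ → ℝ := fun l => (1 + (r + ψ) / ψ * Real.tan (l / 2) ^ 2)⁻¹ with hgdef
  have hg1 : ∀ l, g l ≤ 1 := by
    intro l
    have h1 : (1:ℝ) ≤ 1 + (r + ψ) / ψ * Real.tan (l / 2) ^ 2 := by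
      have : 0 ≤ (r + ψ) / ψ * Real.tan (l / 2) ^ 2 := by positivity
      linarith
    simpa [hgdef] using inv_le_one_of_one_le₀ h1
  have hg0 : ∀ l, 0 ≤ g l := by
    intro l
    have h1 : (0:ℝ) ≤ 1 + (r + ψ) / ψ * Real.tan (l / 2) ^ 2 := by positivity
    simpa [hgdef] using inv_nonneg.2 h1
  have hs : (Set.Icc a b).Nonempty := Set.nonempty_Icc.2 hab
  have hf : BddAbove (Set.range fun i : Set.Icc a b => g i) := by
    refine ⟨1, ?_⟩
    rintro y ⟨i, rfl⟩
    exact hg1 _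
  have hf' : sSup (∅ : Set ℝ) ≤ ⨆ i : Set.Icc a b, g i := by
    rw [Real.sSup_empty]
    haveI : Nonempty (Set.Icc a b) := hs.to_subtype
    exact le_ciSup_of_le hf ⟨a, Set.left_mem_Icc.2 hab⟩ (hg0 a)
  set S : ℝ := ⨆ l ∈ Set.Icc a b, g l with hSdef
  have hSeq : (⨆ i : Set.Icc a b, g i) = S := ciSup_subtype'' hf hf'
  -- pointwise bound
  have hpt : ∀ x ∈ Set.Icc a b, (1 - k * Real.cos x)⁻¹ ≤ 100 * ((r + 2 * ψ) / ψ) * S := by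
    intro x hx
    have hgS : g x ≤ S := by
      have hb' : BddAbove (g '' Set.Icc a b) := by rw [Set.image_eq_range]; exact hf
      have := le_ciSup_set hb' hx
      rwa [hSeq] at this
    have hpi : (3.141592 : ℝ) < Real.pi := Real.pi_gt_d6
    have hpi' : Real.pi < 3.15 := Real.pi_lt_d2
    have hxl : -(3 * Real.pi / 4) ≤ x := le_trans ha hx.1
    have hxu : x ≤ 3 * Real.pi / 4 := le_trans hx.2 hb
    set c : ℝ := Real.cos (x / 2) with hcdef
    set s : ℝ := Real.sin (x / 2) with hsdef
    have hc4 : (1:ℝ)/4 ≤ c := by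
      have h1 : 1 - (x / 2) ^ 2 / 2 ≤ c := Real.one_sub_sq_div_two_le_cos
      have h2 : (x / 2) ^ 2 ≤ (3 * Real.pi / 8) ^ 2 := by nlinarith
      nlinarith
    have hcpos : 0 < c := by linarith
    have hsc : s ^ 2 + c ^ 2 = 1 := Real.sin_sq_add_cos_sq (x / 2)
    have hcosx : Real.cos x = 1 - 2 * s ^ 2 := by
      have h : Real.cos (2 * (x / 2)) = Real.cos (x / 2) ^ 2 - Real.sin (x / 2) ^ 2 :=
        Real.cos_two_mul' (x / 2)
      rw [show (2:ℝ) * (x / 2) = x by ring] at h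
      rw [h, ← hcdef, ← hsdef]; linarith
    have htan : Real.tan (x / 2) = s / c := Real.tan_eq_sin_div_cos (x / 2)
    set P : ℝ := ψ + r * s ^ 2 with hPdef
    have hP : 0 < P := by positivity
    have hAval : 1 - k * Real.cos x = 2 * P / (r + 2 * ψ) := by
      rw [hcosx, hkdef, hPdef]
      field_simp
      ring
    have hBval : g x = ψ * c ^ 2 / P := by
      rw [hgdef]
      simp only
      rw [htan, div_pow, div_mul_div_comm]
      rw [show (1:ℝ) + (r + ψ) * s ^ 2 / (ψ * c ^ 2) = P / (ψ * c ^ 2) by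
        rw [hPdef]; field_simp; nlinarith [hsc]]
      rw [inv_div]
    have hc2 : (1:ℝ)/16 ≤ c ^ 2 := by nlinarith
    calc (1 - k * Real.cos x)⁻¹ = (r + 2 * ψ) / (2 * P) := by rw [hAval, inv_div]
      _ ≤ 100 * ((r + 2 * ψ) / ψ) * (ψ * c ^ 2 / P) := by
          rw [div_le_iff₀ (by positivity : (0:ℝ) < 2 * P)]
          have key : 100 * ((r + 2 * ψ) / ψ) * (ψ * c ^ 2 / P) * (2 * P) =
              200 * (r + 2 * ψ) * c ^ 2 := by
            field_simp
            ring
          rw [key]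
          nlinarith [mul_le_mul_of_nonneg_left hc2 hrψ.le]
      _ = 100 * ((r + 2 * ψ) / ψ) * g x := by rw [hBval]
      _ ≤ 100 * ((r + 2 * ψ) / ψ) * S := by
          have h0 : 0 ≤ 100 * ((r + 2 * ψ) / ψ) := by positivity
          exact mul_le_mul_of_nonneg_left hgS h0
  -- integrability
  have hcont : Continuous fun l => (1 - k * Real.cos l)⁻¹ :=
    Continuous.inv₀ (by continuity) (fun x => (hA x).ne')
  have hint : IntervalIntegrable (fun l => (1 - k * Real.cos l)⁻¹) volume a b :=
    hcont.intervalIntegrable a b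
  have hint2 : IntervalIntegrable (fun _ : ℝ => 100 * ((r + 2 * ψ) / ψ) * S) volume a b :=
    intervalIntegrable_const
  have hmono := intervalIntegral.integral_mono_on hab hint hint2 hpt
  rw [intervalIntegral.integral_const, smul_eq_mul] at hmono
  calc (∫ l in a..b, (1 - r / (r + 2 * ψ) * Real.cos l)⁻¹)
      = ∫ l in a..b, (1 - k * Real.cos l)⁻¹ := by rw [hkdef]
    _ ≤ (b - a) * (100 * ((r + 2 * ψ) / ψ) * S) := hmono
    _ = 100 * (b - a) * ((r + 2 * ψ) / ψ) * S := by ring
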